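/- arXiv:1009.5148 — 4 statements merged into one kernel-verified Lean document; each statement's English description precedes it below -/
import Mathlib

section
/- Let k be a field of characteristic ≠ 2, Γ a group, and σ₀ : Γ → Γ a group automorphism with σ₀ ∘ σ₀ = id; let σ be the induced k-algebra automorphism of the group algebra k[Γ] (σ(e_g) = e_{σ₀(g)}). If the standard comultiplication Δ of k[Γ] (determined by Δ(e_g) = e_g ⊗ e_g) is multiplicative for the σ-super product, i.e. Δ(uv) = Δ(u) ·_σ Δ(v) for all u, v ∈ k[Γ], then σ₀ = id (equivalently, σ₀(g) = g for every g ∈ Γ). In other words, a group algebra admits no Hopf superalgebra structure with nontrivial grading induced by a group involution. -/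
open TensorProduct

/-- Let `k` be a field with `char k ≠ 2`, `Γ` a group and `σ₀` an
involutive group endomorphism of `Γ`; let `σ` be the induced algebra
automorphism of the group algebra `k[Γ]` (`σ(e_g) = e_{σ₀ g}`) and `Δ` the
standard comultiplication (`Δ(e_g) = e_g ⊗ e_g`).  If `Δ` is multiplicative for
the `σ`-super product on `k[Γ] ⊗ k[Γ]`, i.e.
`Δ(uv) = Δ(u)Δ(v) − (1/2)·(id ⊗ (id−σ))(Δu) · ((id−σ) ⊗ id)(Δv)`,
then `σ₀ = id`: a group algebra admits no Hopf superalgebra structure with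
nontrivial grading induced by a group involution. -/
theorem group_algebra_no_nontrivial_super_structure {k : Type*} [Field k]
    (hchar : (2 : k) ≠ 0) {Γ : Type*} [Group Γ]
    (σ₀ : Γ →* Γ) (hσ₀ : ∀ g, σ₀ (σ₀ g) = g)
    (σ : MonoidAlgebra k Γ →ₐ[k] MonoidAlgebra k Γ)
    (hσ : ∀ g : Γ, σ (MonoidAlgebra.single g (1 : k)) = MonoidAlgebra.single (σ₀ g) 1)
    (Δ : MonoidAlgebra k Γ →ₗ[k] MonoidAlgebra k Γ ⊗[k] MonoidAlgebra k Γ)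
    (hΔ : ∀ g : Γ, Δ (MonoidAlgebra.single g (1 : k))
      = MonoidAlgebra.single g (1 : k) ⊗ₜ[k] MonoidAlgebra.single g (1 : k))
    (hmul : ∀ u v : MonoidAlgebra k Γ,
      Δ (u * v) = Δ u * Δ v - (2 : k)⁻¹ •
        ((TensorProduct.map LinearMap.id (LinearMap.id - σ.toLinearMap)) (Δ u) *
          (TensorProduct.map (LinearMap.id - σ.toLinearMap) LinearMap.id) (Δ v))) :
    ∀ g : Γ, σ₀ g = g := by
  intro g
  by_contra hne
  have h := hmul (MonoidAlgebra.single g 1) (MonoidAlgebra.single g 1)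
  rw [MonoidAlgebra.single_mul_single, one_mul, hΔ (g * g), hΔ g] at h
  rw [map_tmul, map_tmul] at h
  simp only [LinearMap.id_coe, id_eq, LinearMap.sub_apply, AlgHom.toLinearMap_apply, hσ] at h
  rw [Algebra.TensorProduct.tmul_mul_tmul, Algebra.TensorProduct.tmul_mul_tmul,
    MonoidAlgebra.single_mul_single, one_mul] at h
  set s : MonoidAlgebra k Γ :=
    MonoidAlgebra.single g 1 * (MonoidAlgebra.single g 1 - MonoidAlgebra.single (σ₀ g) 1) with hs
  set t : MonoidAlgebra k Γ :=
    (MonoidAlgebra.single g 1 - MonoidAlgebra.single (σ₀ g) 1) * MonoidAlgebra.single g 1 with ht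
  have hst : s ⊗ₜ[k] t = 0 := by
    have h0 : (2 : k)⁻¹ • (s ⊗ₜ[k] t) = 0 := sub_eq_self.mp h.symm
    exact (smul_eq_zero.mp h0).resolve_left (inv_ne_zero hchar)
  have hs' : s = MonoidAlgebra.single (g * g) 1 - MonoidAlgebra.single (g * σ₀ g) 1 := by
    rw [hs, mul_sub, MonoidAlgebra.single_mul_single, MonoidAlgebra.single_mul_single, one_mul]
  have ht' : t = MonoidAlgebra.single (g * g) 1 - MonoidAlgebra.single (σ₀ g * g) 1 := by
    rw [ht, sub_mul, MonoidAlgebra.single_mul_single, MonoidAlgebra.single_mul_single, one_mul]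
  set f : MonoidAlgebra k Γ →ₗ[k] k :=
    { toFun := fun x => x.coeff (g * g), map_add' := fun a b => rfl,
      map_smul' := fun c a => rfl } with hf
  have key : (TensorProduct.lid k k) ((TensorProduct.map f f) (s ⊗ₜ[k] t))
      = (TensorProduct.lid k k) ((TensorProduct.map f f) (0 : MonoidAlgebra k Γ ⊗[k] MonoidAlgebra k Γ)) := by
    rw [hst]
  have hne1 : g * σ₀ g ≠ g * g := fun hc => hne (mul_left_cancel hc)
  have hne2 : σ₀ g * g ≠ g * g := fun hc => hne (mul_right_cancel hc)
  have hfs : f s = 1 := by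
    rw [hs', map_sub, hf]
    change (MonoidAlgebra.single (g * g) (1 : k)).coeff (g * g) - (MonoidAlgebra.single (g * σ₀ g) (1 : k)).coeff (g * g) = 1
    simp [MonoidAlgebra.coeff_single_apply, hne1]
  have hft : f t = 1 := by
    rw [ht', map_sub, hf]
    change (MonoidAlgebra.single (g * g) (1 : k)).coeff (g * g) - (MonoidAlgebra.single (σ₀ g * g) (1 : k)).coeff (g * g) = 1
    simp [MonoidAlgebra.coeff_single_apply, hne2]
  rw [map_tmul, hfs, hft, map_zero, map_zero] at key
  simp at key
end

section
/- Let G be an abelian group (written multiplicatively) and χ : ℤ^θ × ℤ^θ → G a bi-multiplicative map. Let f₁,…,f_θ ∈ ℤ^θ, fix an index i, and let c_l ∈ ℤ for l ≠ i satisfy χ(f_i, f_i)^{c_l} = χ(f_i, f_l) χ(f_l, f_i) for all l ≠ i (vertex i is of Cartan type). Set g_i := −f_i and g_l := f_l − c_l f_i for l ≠ i. Then: (i) χ(g_i, g_i) = χ(f_i, f_i), χ(g_i, g_l) = χ(f_l, f_i) and χ(g_l, g_i) = χ(f_i, f_l) for all l ≠ i; (ii) χ(g_l, g_l) = χ(f_l,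 f_l) for all l; (iii) χ(g_l, g_m) χ(g_m, g_l) = χ(f_l, f_m) χ(f_m, f_l) for all l, m. Consequently the matrices (χ(f_l, f_m)) and (χ(g_l, g_m)) are twist-equivalent, i.e. they have the same generalized Dynkin diagram. -/
/-- if vertex `i` is of Cartan type, i.e.
`χ(f i, f i)^(c l) = χ(f i, f l) χ(f l, f i)` for all `l ≠ i`, then the
reflection `s_i` (sending `f i ↦ -f i` and `f l ↦ f l - c l • f i` for `l ≠ i`)
transposes the braiding matrix at the `i`-th row/column and yields a
twist-equivalent matrix: same diagonal, same products `q_{lm} q_{ml}`. -/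
theorem reflection_at_cartan_vertex_twist_equivalent {G : Type*} [CommGroup G] {θ : ℕ}
    (χ : (Fin θ → ℤ) → (Fin θ → ℤ) → G)
    (hχl : ∀ x y z, χ (x + y) z = χ x z * χ y z)
    (hχr : ∀ x y z, χ x (y + z) = χ x y * χ x z)
    (f : Fin θ → (Fin θ → ℤ)) (i : Fin θ)
    (c : Fin θ → ℤ)
    (hc : ∀ l, l ≠ i → χ (f i) (f i) ^ (c l) = χ (f i) (f l) * χ (f l) (f i))
    (g : Fin θ → (Fin θ → ℤ))
    (hgi : g i = - f i) (hg : ∀ l, l ≠ i → g l = f l - c l • f i) :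
    (χ (g i) (g i) = χ (f i) (f i)
      ∧ (∀ l, l ≠ i → χ (g i) (g l) = χ (f l) (f i))
      ∧ (∀ l, l ≠ i → χ (g l) (g i) = χ (f i) (f l)))
    ∧ (∀ l, χ (g l) (g l) = χ (f l) (f l))
    ∧ (∀ l m, χ (g l) (g m) * χ (g m) (g l) = χ (f l) (f m) * χ (f m) (f l)) := by
  set e : (Fin θ → ℤ) → (Fin θ → ℤ) → Additive G :=
    fun x y => Additive.ofMul (χ x y) with he
  have el : ∀ x y z, e (x + y) z = e x z + e y z := fun x y z =>
    congrArg Additive.ofMul (hχl x y z)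
  have er : ∀ x y z, e x (y + z) = e x y + e x z := fun x y z =>
    congrArg Additive.ofMul (hχr x y z)
  have esl : ∀ (n : ℤ) x z, e (n • x) z = n • e x z := by
    intro n x z
    let φ : (Fin θ → ℤ) →+ Additive G := AddMonoidHom.mk' (fun x => e x z) (fun a b => el a b z)
    exact map_zsmul φ n x
  have esr : ∀ (n : ℤ) x z, e z (n • x) = n • e z x := by
    intro n x z
    let φ : (Fin θ → ℤ) →+ Additive G := AddMonoidHom.mk' (fun x => e z x) (fun a b => er z a b)
    exact map_zsmul φ n x
  have hc' : ∀ l, l ≠ i → c l • e (f i) (f i) = e (f i) (f l) + e (f l) (f i) := by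
    intro l hl
    simpa [he, ← ofMul_zpow] using congrArg Additive.ofMul (hc l hl)
  have hgi' : g i = (0 : Fin θ → ℤ) + (-1 : ℤ) • f i := by simp [hgi]
  have hg' : ∀ l, l ≠ i → g l = f l + (-c l) • f i := by
    intro l hl; rw [hg l hl, sub_eq_add_neg, neg_smul]
  have enl : ∀ x y, e (-x) y = - e x y := by
    intro x y; simpa using esl (-1) x y
  have enr : ∀ x y, e y (-x) = - e y x := by
    intro x y; simpa using esr (-1) x y
  have expand : ∀ x u (n : ℤ) y v (m : ℤ),
      e (x + n • u) (y + m • v) = e x y + m • e x v + n • e u y + (n * m) • e u v := by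
    intro x u n y v m
    rw [el, er, er, esl, esl, esr, esr]
    module
  have p1a : e (g i) (g i) = e (f i) (f i) := by
    rw [hgi, enl, enr, neg_neg]
  have p1b : ∀ l, l ≠ i → e (g i) (g l) = e (f l) (f i) := by
    intro l hl
    rw [hgi, hg' l hl, enl, er, esr]
    linear_combination (norm := module) hc' l hl
  have p1c : ∀ l, l ≠ i → e (g l) (g i) = e (f i) (f l) := by
    intro l hl
    rw [hgi, hg' l hl, enr, el, esl]
    linear_combination (norm := module) hc' l hl
  have p2 : ∀ l, e (g l) (g l) = e (f l) (f l) := by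
    intro l
    by_cases hl : l = i
    · rw [hl]; exact p1a
    · rw [hg' l hl, expand]
      linear_combination (norm := module) ((c l) : ℤ) • hc' l hl
  have p3 : ∀ l m, e (g l) (g m) + e (g m) (g l) = e (f l) (f m) + e (f m) (f l) := by
    intro l m
    by_cases hl : l = i <;> by_cases hm : m = i
    · rw [hl, hm]; rw [p1a]
    · rw [hl, p1b m hm, p1c m hm]; exact add_comm _ _
    · rw [hm, p1b l hl, p1c l hl]; exact add_comm _ _
    · rw [hg' l hl, hg' m hm, expand, expand]
      linear_combination (norm := module)
        ((c m) : ℤ) • hc' l hl + ((c l) : ℤ) • hc' m hm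
  exact ⟨⟨p1a, p1b, p1c⟩, p2, p3⟩
end

section
/- Fix θ ≥ 4 and let α₁,…,α_θ be the standard basis of ℤ^θ. Let Δ₊ := { u_{ij} : 1 ≤ i ≤ j ≤ θ, (i,j) ≠ (θ−1, θ) } ∪ { ũ_i := u_{i,θ−2} + α_θ : 1 ≤ i ≤ θ−2 } ∪ { z_{ij} := u_{iθ} + u_{j,θ−2} : 1 ≤ i < j ≤ θ−2 } (the set of positive roots of type D_θ for the trivial, purely even, parity function, which excludes α_{θ−1}+α_θ and all z̃_i) and Δ := Δ₊ ∪ (−Δ₊). Declare two indices i ≠ j adjacent if |i−j| = 1 and {i,j} ≠ {θ−1, θ}, or {i,j} = {θ−2, θ}. Define s_i ∈ Aut(ℤ^θ) by s_i(α_i) = −α_i, s_i(α_j) = α_j + α_i if i,j are adjacent, and s_i(α_j) = α_j otherwise. Then: (a) s_i(Δ) = Δ for every i; (b) max{ k ∈ ℕ₀ : α_j + kα_i ∈ Δ } = 1 if i,j are adjacent and 0 otherwise (so the Cartan matrix recovered from Δ via a_{ij} := −max{ k : α_j + kα_i ∈ Δ } is of type D_θ). -/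
namespace SuperRootSystemD

variable (n : ℕ)

/-- The standard basis vector `α i` of `ℤ^θ`, `θ = n+4 ≥ 4`. -/
def alpha (i : Fin (n + 4)) : Fin (n + 4) → ℤ := Pi.single i 1

/-- `u i j = α i + α (i+1) + ⋯ + α j` (for `i ≤ j`). -/
def u (i j : Fin (n + 4)) : Fin (n + 4) → ℤ := fun l => if i ≤ l ∧ l ≤ j then 1 else 0

/-- The last index (paper index `θ`). -/
abbrev last : Fin (n + 4) := Fin.last (n + 3)

/-- Paper index `θ − 1`. -/
abbrev pre : Fin (n + 4) := ⟨n + 2, by omega⟩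

/-- Paper index `θ − 2`. -/
abbrev pre2 : Fin (n + 4) := ⟨n + 1, by omega⟩

/-- The positive roots of type `D_θ` with the trivial (purely even) parity:
`{ u i j : i ≤ j, (i,j) ≠ (θ−1,θ) } ∪ { ũ i = u i (θ−2) + α θ : i ≤ θ−2 }
∪ { z i j = u i θ + u j (θ−2) : i < j ≤ θ−2 }`. -/
def posRoots : Set (Fin (n + 4) → ℤ) :=
  { x | ∃ i j : Fin (n + 4), i ≤ j ∧ ¬(i = pre n ∧ j = last n) ∧ x = u n i j }
    ∪ { x | ∃ i : Fin (n + 4), i ≤ pre2 n ∧ x = u n i (pre2 n) + alpha n (last n) }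
    ∪ { x | ∃ i j : Fin (n + 4), i < j ∧ j ≤ pre2 n ∧ x = u n i (last n) + u n j (pre2 n) }

/-- The set of roots `Δ = Δ₊ ∪ (−Δ₊)`. -/
def roots : Set (Fin (n + 4) → ℤ) := posRoots n ∪ (Neg.neg '' posRoots n)

/-- Adjacency in the Dynkin diagram of type `D_θ`: `|i − j| = 1` except for the
pair `{θ−1, θ}`, together with the pair `{θ−2, θ}`. -/
abbrev adjacent (i j : Fin (n + 4)) : Prop :=
  (((i : ℤ) - (j : ℤ)).natAbs = 1 ∧ ¬((i = pre n ∧ j = last n) ∨ (i = last n ∧ j = pre n)))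
    ∨ ((i = pre2 n ∧ j = last n) ∨ (i = last n ∧ j = pre2 n))

/-- `−a_{ij}` for the Cartan matrix of type `D_θ`. -/
def coeff (i j : Fin (n + 4)) : ℤ :=
  if j = i then -2 else if adjacent n i j then 1 else 0

/-- The reflection `s_i`, determined by `s_i (α j) = α j − a_{ij} α i`. -/
def refl (i : Fin (n + 4)) (v : Fin (n + 4) → ℤ) : Fin (n + 4) → ℤ :=
  v + (∑ j, coeff n i j * v j) • alpha n i

/-- Extension of `x` to `ℕ` by zero. -/
def ext (x : Fin (n + 4) → ℤ) : ℕ → ℤ := fun k => if h : k < n + 4 then x ⟨k, h⟩ else 0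

/-- The coordinates of `x` in the orthogonal basis `e` of `D_θ`. -/
def dd (x : Fin (n + 4) → ℤ) : ℕ → ℤ := fun k =>
  if k = n + 2 then ext n x (n + 2) + ext n x (n + 3) - ext n x (n + 1)
  else if k = n + 3 then ext n x (n + 3) - ext n x (n + 2)
  else ext n x k - (if k = 0 then 0 else ext n x (k - 1))

/-- two-point vector -/
def e2 (A B : ℕ) (s t : ℤ) : ℕ → ℤ := fun k => (if k = A then s else 0) + (if k = B then t else 0)

/-- the quadratic form -/
def qq (x : Fin (n + 4) → ℤ) : ℤ := ∑ k ∈ Finset.range (n + 4), (dd n x k) ^ 2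

lemma dd_add (x y : Fin (n + 4) → ℤ) (k : ℕ) : dd n (x + y) k = dd n x k + dd n y k := by
  simp only [dd, ext, Pi.add_apply]
  split_ifs <;> ring

lemma dd_neg (x : Fin (n + 4) → ℤ) (k : ℕ) : dd n (-x) k = -dd n x k := by
  simp only [dd, ext, Pi.neg_apply]
  split_ifs <;> ring

lemma dd_smul (c : ℤ) (x : Fin (n + 4) → ℤ) (k : ℕ) : dd n (c • x) k = c * dd n x k := by
  simp only [dd, ext, Pi.smul_apply, smul_eq_mul]
  split_ifs <;> ring

lemma alpha_eq_u (i : Fin (n + 4)) : alpha n i = u n i i := by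
  funext l
  simp only [alpha, u, Pi.single_apply, Fin.le_def]
  split_ifs with h1 h2 h2 <;> first | rfl | (exfalso; rw [Fin.ext_iff] at *; omega)

lemma G1 (i j : Fin (n + 4)) (hij : i ≤ j) (hj : (j : ℕ) ≤ n + 2) :
    ∀ k < n + 4, dd n (u n i j) k = e2 (i : ℕ) ((j : ℕ) + 1) 1 (-1) k := by
  intro k hk
  rw [Fin.le_def] at hij
  simp only [dd, ext, u, e2, Fin.le_def]
  split_ifs <;> omega

lemma G2 (i : Fin (n + 4)) (hi : (i : ℕ) ≤ n + 1) :
    ∀ k < n + 4, dd n (u n i (last n)) k = e2 (i : ℕ) (n + 2) 1 1 k := by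
  intro k hk
  simp only [dd, ext, u, e2, Fin.le_def, last, Fin.val_last]
  split_ifs <;> omega

lemma G3 : ∀ k < n + 4, dd n (u n (last n) (last n)) k = e2 (n + 2) (n + 3) 1 1 k := by
  intro k hk
  simp only [dd, ext, u, e2, Fin.le_def, last, Fin.val_last]
  split_ifs <;> omega

lemma G4 (i : Fin (n + 4)) (hi : (i : ℕ) ≤ n + 1) :
    ∀ k < n + 4, dd n (u n i (pre2 n) + alpha n (last n)) k = e2 (i : ℕ) (n + 3) 1 1 k := by
  intro k hk
  rw [alpha_eq_u]
  rw [dd_add]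
  have h1 := G1 n i (pre2 n) (by rw [Fin.le_def]; exact hi) (by simp [pre2]) k hk
  have h3 := G3 n k hk
  rw [h1, h3]
  simp only [e2, pre2]
  split_ifs <;> omega

lemma G5 (i j : Fin (n + 4)) (hij : i < j) (hj : (j : ℕ) ≤ n + 1) :
    ∀ k < n + 4, dd n (u n i (last n) + u n j (pre2 n)) k = e2 (i : ℕ) (j : ℕ) 1 1 k := by
  intro k hk
  rw [dd_add]
  have h2 := G2 n i (by rw [Fin.lt_def] at hij; omega) k hk
  have h1 := G1 n j (pre2 n) (by rw [Fin.le_def]; exact hj) (by simp [pre2]) k hk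
  rw [h1, h2]
  simp only [e2, pre2]
  rw [Fin.lt_def] at hij
  split_ifs <;> omega

lemma sum_ite_range (N A : ℕ) (hA : A < N) (c : ℤ) :
    ∑ k ∈ Finset.range N, (if k = A then c else 0) = c := by
  rw [Finset.sum_ite_eq' (Finset.range N) A (fun _ => c)]
  simp [Finset.mem_range.mpr hA]

lemma qq_e2 (x : Fin (n + 4) → ℤ) (A B : ℕ) (s t : ℤ) (hA : A < n + 4) (hB : B < n + 4)
    (hAB : A ≠ B) (hs : s = 1 ∨ s = -1) (ht : t = 1 ∨ t = -1)
    (h : ∀ k < n + 4, dd n x k = e2 A B s t k) : qq n x = 2 := by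
  have hpt : ∀ k, (e2 A B s t k) ^ 2 = (if k = A then 1 else 0) + (if k = B then 1 else 0) := by
    intro k
    simp only [e2]
    split_ifs with h1 h2 h2
    · exact absurd (h1 ▸ h2) hAB
    · rcases hs with rfl | rfl <;> ring
    · rcases ht with rfl | rfl <;> ring
    · ring
  have : qq n x = ∑ k ∈ Finset.range (n + 4),
      ((if k = A then (1:ℤ) else 0) + (if k = B then 1 else 0)) := by
    refine Finset.sum_congr rfl fun k hk => ?_
    rw [h k (Finset.mem_range.mp hk), hpt]
  rw [this, Finset.sum_add_distrib, sum_ite_range _ _ hA, sum_ite_range _ _ hB]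
  norm_num

lemma qq_neg (x : Fin (n + 4) → ℤ) : qq n (-x) = qq n x := by
  refine Finset.sum_congr rfl fun k _ => ?_
  rw [dd_neg]; ring

lemma recover (x : Fin (n + 4) → ℤ) :
    ∀ k, k ≤ n + 1 → ext n x k = ∑ a ∈ Finset.range (k + 1), dd n x a := by
  intro k
  induction k with
  | zero =>
    intro _
    rw [Finset.sum_range_one]
    simp only [dd]
    rw [if_neg (by omega), if_neg (by omega)]
    simp
  | succ k ih =>
    intro h
    rw [Finset.sum_range_succ, ← ih (by omega)]
    simp only [dd]
    rw [if_neg (by omega), if_neg (by omega), if_neg (by omega)]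
    simp only [Nat.add_sub_cancel]
    ring

lemma ext_apply (x : Fin (n + 4) → ℤ) (l : Fin (n + 4)) : ext n x (l : ℕ) = x l := by
  simp [ext, l.isLt]

lemma dd_val2 (z : Fin (n + 4) → ℤ) :
    dd n z (n + 2) = ext n z (n + 2) + ext n z (n + 3) - ext n z (n + 1) := by
  simp only [dd]
  split_ifs <;> first | rfl | omega

lemma dd_val3 (z : Fin (n + 4) → ℤ) :
    dd n z (n + 3) = ext n z (n + 3) - ext n z (n + 2) := by
  simp only [dd]
  split_ifs <;> first | rfl | omega

lemma dd_inj (x y : Fin (n + 4) → ℤ) (h : ∀ k < n + 4, dd n x k = dd n y k) : x = y := by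
  have he : ∀ k ≤ n + 1, ext n x k = ext n y k := by
    intro k hk
    rw [recover n x k hk, recover n y k hk]
    exact Finset.sum_congr rfl fun a ha => h a (by have := Finset.mem_range.mp ha; omega)
  have h2 := h (n + 2) (by omega)
  have h3 := h (n + 3) (by omega)
  rw [dd_val2, dd_val2] at h2
  rw [dd_val3, dd_val3] at h3
  have e1 := he (n + 1) le_rfl
  funext l
  have hl := l.isLt
  rcases Nat.lt_or_ge (l : ℕ) (n + 2) with hc | hc
  · have hx := ext_apply n x l
    have hy := ext_apply n y l
    rw [← hx, ← hy]
    exact he _ (by omega)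
  · have hw2 : (n:ℕ) + 2 < n + 4 := by omega
    have hw3 : (n:ℕ) + 3 < n + 4 := by omega
    have hx2 : ∀ z : Fin (n+4) → ℤ, ext n z (n+2) = z ⟨n+2, hw2⟩ := fun z => dif_pos hw2
    have hx3 : ∀ z : Fin (n+4) → ℤ, ext n z (n+3) = z ⟨n+3, hw3⟩ := fun z => dif_pos hw3
    rw [hx2 x, hx2 y, hx3 x, hx3 y] at h2 h3
    rw [e1] at h2
    rcases Nat.lt_or_ge (l : ℕ) (n + 3) with hc2 | hc2
    · have hle : l = ⟨n+2, hw2⟩ := Fin.ext (show (l:ℕ) = n+2 by omega)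
      rw [hle]; omega
    · have hle : l = ⟨n+3, hw3⟩ := Fin.ext (show (l:ℕ) = n+3 by omega)
      rw [hle]; omega

lemma int_sq_pm (z : ℤ) (h : z ^ 2 = 1) : z = 1 ∨ z = -1 := by
  have h2 : (z - 1) * (z + 1) = 0 := by linear_combination h
  rcases mul_eq_zero.mp h2 with h3 | h3 <;> omega

lemma int_sq_one (z : ℤ) (h1 : z ≠ 0) (h2 : z ^ 2 ≤ 2) : z ^ 2 = 1 := by
  rcases Nat.lt_or_ge z.natAbs 2 with h | h
  · have : z = 1 ∨ z = -1 := by omega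
    rcases this with rfl | rfl <;> norm_num
  · exfalso
    have h4 : (2:ℤ) ≤ |z| := by rw [Int.abs_eq_natAbs]; exact_mod_cast h
    nlinarith [abs_nonneg z, sq_abs z]

lemma shape_of_qq (x : Fin (n + 4) → ℤ) (h : qq n x = 2) :
    ∃ A B : ℕ, ∃ s t : ℤ, A < B ∧ B < n + 4 ∧ (s = 1 ∨ s = -1) ∧ (t = 1 ∨ t = -1) ∧
      ∀ k < n + 4, dd n x k = e2 A B s t k := by
  classical
  set f : ℕ → ℤ := fun k => (dd n x k) ^ 2 with hf
  have hsum : ∑ k ∈ Finset.range (n + 4), f k = 2 := h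
  obtain ⟨A, hAm, hA⟩ := Finset.exists_ne_zero_of_sum_ne_zero (by rw [hsum]; norm_num :
    ∑ k ∈ Finset.range (n + 4), f k ≠ 0)
  have hA0 : dd n x A ≠ 0 := fun hz => hA (by simp [hf, hz])
  have hrest : f A + ∑ k ∈ (Finset.range (n + 4)).erase A, f k = 2 := by
    rw [Finset.add_sum_erase _ f hAm, hsum]
  have hnonneg : ∀ k ∈ (Finset.range (n + 4)).erase A, 0 ≤ f k := fun k _ => sq_nonneg _
  have hfa' : f A = dd n x A ^ 2 := rfl
  have hfA : f A = 1 := int_sq_one _ hA0 (by have := Finset.sum_nonneg hnonneg; omega)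
  have hsum2 : ∑ k ∈ (Finset.range (n + 4)).erase A, f k = 1 := by omega
  obtain ⟨B, hBm, hB⟩ := Finset.exists_ne_zero_of_sum_ne_zero (by rw [hsum2]; norm_num :
    ∑ k ∈ (Finset.range (n + 4)).erase A, f k ≠ 0)
  have hB0 : dd n x B ≠ 0 := fun hz => hB (by simp [hf, hz])
  have hrest2 : f B + ∑ k ∈ ((Finset.range (n + 4)).erase A).erase B, f k = 1 := by
    rw [Finset.add_sum_erase _ f hBm, hsum2]
  have hnonneg2 : ∀ k ∈ ((Finset.range (n + 4)).erase A).erase B, 0 ≤ f k :=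
    fun k _ => sq_nonneg _
  have hfb' : f B = dd n x B ^ 2 := rfl
  have hfB : f B = 1 := int_sq_one _ hB0 (by have := Finset.sum_nonneg hnonneg2; omega)
  have hzero : ∀ k < n + 4, k ≠ A → k ≠ B → dd n x k = 0 := by
    intro k hk hkA hkB
    have hmem : k ∈ ((Finset.range (n + 4)).erase A).erase B := by
      simp [Finset.mem_erase, hkA, hkB, Finset.mem_range, hk]
    have hsz : ∑ k ∈ ((Finset.range (n + 4)).erase A).erase B, f k = 0 := by omega
    have := (Finset.sum_eq_zero_iff_of_nonneg hnonneg2).mp hsz k hmem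
    exact pow_eq_zero_iff (n := 2) (by norm_num) |>.mp this
  have hAB : A ≠ B := fun he => (Finset.mem_erase.mp hBm).1 he.symm
  have hAlt : A < n + 4 := Finset.mem_range.mp hAm
  have hBlt : B < n + 4 := Finset.mem_range.mp (Finset.mem_erase.mp hBm).2
  have hsA := int_sq_pm _ (hfa' ▸ hfA)
  have hsB := int_sq_pm _ (hfb' ▸ hfB)
  rcases Nat.lt_or_ge A B with hord | hord
  · refine ⟨A, B, dd n x A, dd n x B, hord, hBlt, hsA, hsB, ?_⟩
    intro k hk
    simp only [e2]
    split_ifs with h1 h2 h2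
    · omega
    · rw [h1]; ring
    · rw [h2]; ring
    · rw [hzero k hk h1 h2]; ring
  · refine ⟨B, A, dd n x B, dd n x A, by omega, hAlt, hsB, hsA, ?_⟩
    intro k hk
    simp only [e2]
    split_ifs with h1 h2 h2
    · omega
    · rw [h1]; ring
    · rw [h2]; ring
    · rw [hzero k hk h2 h1]; ring

lemma e2_ext (A B : ℕ) (s t : ℤ) (A' B' : ℕ) (hA : A' = A) (hB : B' = B) (k : ℕ) :
    e2 A' B' s t k = e2 A B s t k := by
  subst hA hB; rfl

lemma val_mk (a : ℕ) (h : a < n + 4) : ((⟨a, h⟩ : Fin (n + 4)) : ℕ) = a := rfl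

lemma val_last : ((last n : Fin (n + 4)) : ℕ) = n + 3 := rfl

lemma val_pre : ((pre n : Fin (n + 4)) : ℕ) = n + 2 := rfl

lemma val_pre2 : ((pre2 n : Fin (n + 4)) : ℕ) = n + 1 := rfl

lemma shape_pos (x : Fin (n + 4) → ℤ) (A B : ℕ) (t : ℤ) (hAB : A < B) (hB : B < n + 4)
    (ht : t = 1 ∨ t = -1) (h : ∀ k < n + 4, dd n x k = e2 A B 1 t k) : x ∈ posRoots n := by
  have hA4 : A < n + 4 := by omega
  have fin : ∀ (r : Fin (n + 4) → ℤ), (∀ k < n + 4, dd n r k = e2 A B 1 t k) → x = r :=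
    fun r hr => dd_inj n x r (fun k hk => (h k hk).trans (hr k hk).symm)
  have hpre_ne_last : ¬ (pre n = last n) := by
    rw [Fin.ext_iff]; rw [val_last]; intro hx; simp at hx
  rcases Nat.lt_or_ge B (n + 2) with hc | hc
  · rcases ht with rfl | rfl
    · -- z case
      refine Or.inr ⟨⟨A, hA4⟩, ⟨B, hB⟩, Fin.mk_lt_mk.mpr hAB, Fin.mk_le_mk.mpr (by omega),
        fin _ fun k hk => ?_⟩
      exact (G5 n _ _ (Fin.mk_lt_mk.mpr hAB) (by rw [val_mk] <;> omega) k hk).trans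
        (e2_ext A B 1 1 _ _ rfl rfl k)
    · -- u A (B-1)
      have hB1 : B - 1 < n + 4 := by omega
      refine Or.inl (Or.inl ⟨⟨A, hA4⟩, ⟨B - 1, hB1⟩, Fin.mk_le_mk.mpr (by omega),
        fun hpl => ?_, fin _ fun k hk => ?_⟩)
      · have := hpl.2; rw [Fin.ext_iff, val_mk, val_last] at this; omega
      · exact (G1 n _ _ (Fin.mk_le_mk.mpr (by omega)) (by rw [val_mk] <;> omega) k hk).trans
          (e2_ext A B 1 (-1) _ _ rfl (by rw [val_mk] <;> omega) k)
  · rcases Nat.lt_or_ge B (n + 3) with hc3 | hc3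
    · -- B = n + 2
      have hBv : B = n + 2 := by omega
      subst hBv
      rcases ht with rfl | rfl
      · -- u A last
        refine Or.inl (Or.inl ⟨⟨A, hA4⟩, last n, by rw [Fin.le_def, val_mk, val_last]; omega,
          fun hpl => ?_, fin _ fun k hk => ?_⟩)
        · have := hpl.1; rw [Fin.ext_iff, val_mk] at this; simp [pre] at this; omega
        · exact (G2 n _ (by rw [val_mk] <;> omega) k hk).trans
            (e2_ext A (n + 2) 1 1 _ _ rfl rfl k)
      · -- u A pre2
        refine Or.inl (Or.inl ⟨⟨A, hA4⟩, pre2 n, Fin.mk_le_mk.mpr (by omega),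
          fun hpl => ?_, fin _ fun k hk => ?_⟩)
        · have := hpl.2; rw [Fin.ext_iff] at this; simp [pre2, val_last] at this
        · exact (G1 n _ _ (Fin.mk_le_mk.mpr (by omega)) (by rw [val_pre2] <;> omega) k hk).trans
            (e2_ext A (n + 2) 1 (-1) _ _ rfl rfl k)
    · -- B = n + 3
      have hBv : B = n + 3 := by omega
      subst hBv
      rcases ht with rfl | rfl
      · rcases Nat.lt_or_ge A (n + 2) with hc2 | hc2
        · -- tilde u A
          refine Or.inl (Or.inr ⟨⟨A, hA4⟩, Fin.mk_le_mk.mpr (by omega),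
            fin _ fun k hk => ?_⟩)
          exact (G4 n _ (by rw [val_mk] <;> omega) k hk).trans
            (e2_ext A (n + 3) 1 1 _ _ rfl rfl k)
        · -- A = n + 2 : u last last
          have hAv : A = n + 2 := by omega
          subst hAv
          refine Or.inl (Or.inl ⟨last n, last n, le_refl _,
            fun hpl => hpre_ne_last hpl.1.symm, fin _ fun k hk => ?_⟩)
          exact (G3 n k hk).trans (e2_ext (n + 2) (n + 3) 1 1 _ _ rfl rfl k)
      · -- u A pre
        refine Or.inl (Or.inl ⟨⟨A, hA4⟩, pre n, Fin.mk_le_mk.mpr (by omega),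
          fun hpl => hpre_ne_last hpl.2, fin _ fun k hk => ?_⟩)
        exact (G1 n _ _ (Fin.mk_le_mk.mpr (by omega)) (by rw [val_pre] <;> omega) k hk).trans
          (e2_ext A (n + 3) 1 (-1) _ _ rfl rfl k)

lemma qq_pos (x : Fin (n + 4) → ℤ) (hx : x ∈ posRoots n) : qq n x = 2 := by
  rcases hx with (⟨i, j, hij, hcond, rfl⟩ | ⟨i, hi, rfl⟩) | ⟨i, j, hij, hj, rfl⟩
  · rcases Nat.lt_or_ge (j : ℕ) (n + 3) with hj | hj
    · exact qq_e2 n _ (i : ℕ) ((j : ℕ) + 1) 1 (-1) (by omega) (by omega)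
        (by rw [Fin.le_def] at hij; omega) (Or.inl rfl) (Or.inr rfl) (G1 n i j hij (by omega))
    · have hjl : j = last n := Fin.ext (by rw [val_last]; omega)
      subst hjl
      rcases Nat.lt_or_ge (i : ℕ) (n + 2) with hi | hi
      · exact qq_e2 n _ (i : ℕ) (n + 2) 1 1 (by omega) (by omega) (by omega)
          (Or.inl rfl) (Or.inl rfl) (G2 n i (by omega))
      · have hi3 : (i : ℕ) = n + 3 := by
          rcases Nat.lt_or_ge (i : ℕ) (n + 3) with hi2 | hi2
          · exact absurd ⟨Fin.ext (by rw [val_pre]; omega), rfl⟩ hcond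
          · have := i.isLt; omega
        have hil : i = last n := Fin.ext (by rw [val_last]; omega)
        subst hil
        exact qq_e2 n _ (n + 2) (n + 3) 1 1 (by omega) (by omega) (by omega)
          (Or.inl rfl) (Or.inl rfl) (G3 n)
  · rw [Fin.le_def, val_pre2] at hi
    exact qq_e2 n _ (i : ℕ) (n + 3) 1 1 (by omega) (by omega) (by omega)
      (Or.inl rfl) (Or.inl rfl) (G4 n i hi)
  · rw [Fin.le_def, val_pre2] at hj
    rw [Fin.lt_def] at hij
    exact qq_e2 n _ (i : ℕ) (j : ℕ) 1 1 (by omega) (by omega) (by omega)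
      (Or.inl rfl) (Or.inl rfl) (G5 n i j (Fin.lt_def.mpr hij) hj)

lemma roots_iff (x : Fin (n + 4) → ℤ) : x ∈ roots n ↔ qq n x = 2 := by
  constructor
  · rintro (hx | ⟨y, hy, rfl⟩)
    · exact qq_pos n x hx
    · rw [show Neg.neg y = -y from rfl, qq_neg]; exact qq_pos n y hy
  · intro h
    obtain ⟨A, B, s, t, hAB, hB, hs, ht, hsh⟩ := shape_of_qq n x h
    rcases hs with rfl | rfl
    · exact Or.inl (shape_pos n x A B t hAB hB ht hsh)
    · refine Or.inr ⟨-x, shape_pos n (-x) A B (-t) hAB hB (by omega) fun k hk => ?_, neg_neg x⟩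
      rw [dd_neg, hsh k hk]
      simp only [e2]
      split_ifs <;> ring

lemma coeff_val (i j : Fin (n + 4)) : coeff n i j =
    if (j : ℕ) = (i : ℕ) then -2
    else if (((i : ℕ) = (j : ℕ) + 1 ∨ (j : ℕ) = (i : ℕ) + 1)
          ∧ ¬((i : ℕ) = n + 2 ∧ (j : ℕ) = n + 3) ∧ ¬((i : ℕ) = n + 3 ∧ (j : ℕ) = n + 2))
        ∨ ((i : ℕ) = n + 1 ∧ (j : ℕ) = n + 3) ∨ ((i : ℕ) = n + 3 ∧ (j : ℕ) = n + 1)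
      then 1 else 0 := by
  simp only [coeff, adjacent, Fin.ext_iff, val_pre, val_last, val_pre2]
  split_ifs <;> first | rfl | omega

lemma sum_supp2 (f : Fin (n + 4) → ℤ) (a b : Fin (n + 4)) (hab : a ≠ b)
    (h0 : ∀ k, k ≠ a → k ≠ b → f k = 0) : ∑ k, f k = f a + f b := by
  rw [← Finset.sum_subset (Finset.subset_univ {a, b})
    (fun k _ hk => by simp only [Finset.mem_insert, Finset.mem_singleton, not_or] at hk
                      exact h0 k hk.1 hk.2)]
  exact Finset.sum_pair hab

lemma sum_supp3 (f : Fin (n + 4) → ℤ) (a b c : Fin (n + 4)) (hab : a ≠ b) (hac : a ≠ c)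
    (hbc : b ≠ c) (h0 : ∀ k, k ≠ a → k ≠ b → k ≠ c → f k = 0) :
    ∑ k, f k = f a + f b + f c := by
  rw [← Finset.sum_subset (Finset.subset_univ {a, b, c})
    (fun k _ hk => by simp only [Finset.mem_insert, Finset.mem_singleton, not_or] at hk
                      exact h0 k hk.1 hk.2.1 hk.2.2)]
  rw [Finset.sum_insert (by simp [hab, hac]), Finset.sum_pair hbc]
  ring

lemma sum_supp4 (f : Fin (n + 4) → ℤ) (a b c d : Fin (n + 4)) (hab : a ≠ b) (hac : a ≠ c)
    (had : a ≠ d) (hbc : b ≠ c) (hbd : b ≠ d) (hcd : c ≠ d)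
    (h0 : ∀ k, k ≠ a → k ≠ b → k ≠ c → k ≠ d → f k = 0) :
    ∑ k, f k = f a + f b + f c + f d := by
  rw [← Finset.sum_subset (Finset.subset_univ {a, b, c, d})
    (fun k _ hk => by simp only [Finset.mem_insert, Finset.mem_singleton, not_or] at hk
                      exact h0 k hk.1 hk.2.1 hk.2.2.1 hk.2.2.2)]
  rw [Finset.sum_insert (by simp [hab, hac, had]), Finset.sum_insert (by simp [hbc, hbd]),
    Finset.sum_pair hcd]
  ring

lemma sum_mul_e2 (N A B : ℕ) (s t : ℤ) (f : ℕ → ℤ) (hA : A < N) (hB : B < N) :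
    ∑ k ∈ Finset.range N, f k * e2 A B s t k = f A * s + f B * t := by
  simp only [e2, mul_add, Finset.sum_add_distrib, mul_ite, mul_zero]
  rw [Finset.sum_ite_eq' (Finset.range N) A (fun k => f k * s),
    Finset.sum_ite_eq' (Finset.range N) B (fun k => f k * t)]
  simp [Finset.mem_range.mpr hA, Finset.mem_range.mpr hB]

lemma ext_val (x : Fin (n + 4) → ℤ) (k : ℕ) (hk : k < n + 4) : ext n x k = x ⟨k, hk⟩ :=
  dif_pos hk

lemma dd_val_low (x : Fin (n + 4) → ℤ) (m : ℕ) (hm : 0 < m) (hm1 : m ≤ n + 1) :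
    dd n x m = ext n x m - ext n x (m - 1) := by
  simp only [dd]
  rw [if_neg (by omega), if_neg (by omega), if_neg (by omega)]

lemma dd_val_zero (x : Fin (n + 4) → ℤ) : dd n x 0 = ext n x 0 := by
  simp only [dd]
  rw [if_neg (by omega), if_neg (by omega)]
  simp

lemma mk_ne (a b : ℕ) (ha : a < n + 4) (hb : b < n + 4) (h : a ≠ b) :
    (⟨a, ha⟩ : Fin (n + 4)) ≠ ⟨b, hb⟩ := fun he => h (congrArg Fin.val he)

lemma L1 (i : Fin (n + 4)) (x : Fin (n + 4) → ℤ) :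
    ∑ j, coeff n i j * x j = -∑ k ∈ Finset.range (n + 4), dd n x k * dd n (alpha n i) k := by
  have hil := i.isLt
  have p1 : n + 1 < n + 4 := Nat.add_lt_add_left (by decide) n
  have p2 : n + 2 < n + 4 := Nat.add_lt_add_left (by decide) n
  have p3 : n + 3 < n + 4 := Nat.add_lt_add_left (by decide) n
  have e1 : ext n x (n + 1) = x ⟨n + 1, p1⟩ := ext_val n x _ p1
  have e2' : ext n x (n + 2) = x ⟨n + 2, p2⟩ := ext_val n x _ p2
  have e3 : ext n x (n + 3) = x ⟨n + 3, p3⟩ := ext_val n x _ p3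
  rcases Nat.lt_or_ge (i : ℕ) (n + 3) with hi | hi
  · have hG : ∀ k < n + 4, dd n (alpha n i) k = e2 (i : ℕ) ((i : ℕ) + 1) 1 (-1) k := by
      rw [alpha_eq_u]; exact G1 n i i le_rfl (by omega)
    have hRHS : ∑ k ∈ Finset.range (n + 4), dd n x k * dd n (alpha n i) k
        = dd n x (i : ℕ) * 1 + dd n x ((i : ℕ) + 1) * (-1) := by
      rw [Finset.sum_congr rfl (fun k hk => by rw [hG k (Finset.mem_range.mp hk)])]
      exact sum_mul_e2 (n + 4) _ _ _ _ _ (by omega) (by omega)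
    rw [hRHS]
    rcases Nat.lt_or_ge (i : ℕ) (n + 1) with hi2 | hi2
    · -- i.val ≤ n
      rcases Nat.eq_zero_or_pos (i : ℕ) with hz | hz
      · -- i.val = 0
        have q0 : 0 < n + 4 := Nat.succ_pos _
        have hv : i = ⟨0, q0⟩ := Fin.ext hz
        subst hv
        have pb : 1 < n + 4 := by omega
        rw [sum_supp2 n _ ⟨0, q0⟩ ⟨1, pb⟩ (mk_ne n _ _ _ _ (by omega)) ?h0]
        case h0 =>
          intro k h1 h2
          have v1 : (k : ℕ) ≠ 0 := fun hv => h1 (Fin.ext hv)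
          have v2 : (k : ℕ) ≠ 1 := fun hv => h2 (Fin.ext hv)
          rw [coeff_val, if_neg (by rw [val_mk]; omega), if_neg (by rw [val_mk]; omega)]
          ring
        rw [show ((⟨0, q0⟩ : Fin (n + 4)) : ℕ) = 0 from rfl]
        rw [dd_val_zero, show (0:ℕ) + 1 = 1 from rfl, dd_val_low n x 1 (by omega) (by omega)]
        rw [show (1:ℕ) - 1 = 0 from rfl]
        rw [ext_val n x 0 q0, ext_val n x 1 pb]
        simp only [coeff_val, val_mk]
        split_ifs <;> (try simp only [or_true, true_or, true_and, and_true, not_true, false_or, or_false] at *) <;> omega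
      · -- 1 ≤ i.val ≤ n
        have pa : (i : ℕ) - 1 < n + 4 := by omega
        have pc : (i : ℕ) + 1 < n + 4 := by omega
        rw [sum_supp3 n _ ⟨(i : ℕ) - 1, pa⟩ ⟨(i : ℕ), i.isLt⟩ ⟨(i : ℕ) + 1, pc⟩
          (mk_ne n _ _ _ _ (by omega)) (mk_ne n _ _ _ _ (by omega))
          (mk_ne n _ _ _ _ (by omega)) ?h0]
        case h0 =>
          intro k h1 h2 h3
          have v1 : (k : ℕ) ≠ (i : ℕ) - 1 := fun hv => h1 (Fin.ext hv)
          have v2 : (k : ℕ) ≠ (i : ℕ) := fun hv => h2 (Fin.ext hv)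
          have v3 : (k : ℕ) ≠ (i : ℕ) + 1 := fun hv => h3 (Fin.ext hv)
          rw [coeff_val, if_neg (by omega), if_neg (by omega)]
          ring
        rw [dd_val_low n x (i : ℕ) (by omega) (by omega),
          dd_val_low n x ((i : ℕ) + 1) (by omega) (by omega)]
        simp only [Nat.add_sub_cancel]
        rw [ext_val n x ((i : ℕ) - 1) pa, ext_val n x (i : ℕ) i.isLt,
          ext_val n x ((i : ℕ) + 1) pc]
        simp only [coeff_val, val_mk]
        split_ifs <;> (try simp only [or_true, true_or, true_and, and_true, not_true, false_or, or_false] at *) <;> omega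
    · rcases Nat.lt_or_ge (i : ℕ) (n + 2) with hi3 | hi3
      · -- i.val = n + 1
        have hv : i = ⟨n + 1, p1⟩ := Fin.ext (show (i:ℕ) = n + 1 by omega)
        subst hv
        have pa : n < n + 4 := by omega
        rw [sum_supp4 n _ ⟨n, pa⟩ ⟨n + 1, p1⟩ ⟨n + 2, p2⟩ ⟨n + 3, p3⟩
          (mk_ne n _ _ _ _ (by omega)) (mk_ne n _ _ _ _ (by omega))
          (mk_ne n _ _ _ _ (by omega)) (mk_ne n _ _ _ _ (by omega))
          (mk_ne n _ _ _ _ (by omega)) (mk_ne n _ _ _ _ (by omega)) ?h0]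
        case h0 =>
          intro k h1 h2 h3 h4
          have v1 : (k : ℕ) ≠ n := fun hv => h1 (Fin.ext hv)
          have v2 : (k : ℕ) ≠ n + 1 := fun hv => h2 (Fin.ext hv)
          have v3 : (k : ℕ) ≠ n + 2 := fun hv => h3 (Fin.ext hv)
          have v4 : (k : ℕ) ≠ n + 3 := fun hv => h4 (Fin.ext hv)
          rw [coeff_val, if_neg (by rw [val_mk]; omega), if_neg (by rw [val_mk]; omega)]
          ring
        rw [show ((⟨n + 1, p1⟩ : Fin (n + 4)) : ℕ) = n + 1 from rfl]
        rw [dd_val_low n x (n + 1) (by omega) (by omega), dd_val2 n x]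
        rw [show n + 1 - 1 = n from rfl]
        rw [ext_val n x n pa, e1, e2', e3]
        simp only [coeff_val, val_mk]
        split_ifs <;> (try simp only [or_true, true_or, true_and, and_true, not_true, false_or, or_false] at *) <;> omega
      · -- i.val = n + 2
        have hv : i = ⟨n + 2, p2⟩ := Fin.ext (show (i:ℕ) = n + 2 by omega)
        subst hv
        rw [sum_supp2 n _ ⟨n + 1, p1⟩ ⟨n + 2, p2⟩ (mk_ne n _ _ _ _ (by omega)) ?h0]
        case h0 =>
          intro k h1 h2
          have v1 : (k : ℕ) ≠ n + 1 := fun hv => h1 (Fin.ext hv)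
          have v2 : (k : ℕ) ≠ n + 2 := fun hv => h2 (Fin.ext hv)
          rw [coeff_val, if_neg (by rw [val_mk]; omega), if_neg (by rw [val_mk]; omega)]
          ring
        rw [show ((⟨n + 2, p2⟩ : Fin (n + 4)) : ℕ) = n + 2 from rfl]
        rw [dd_val2 n x, show n + 2 + 1 = n + 3 from rfl, dd_val3 n x]
        rw [e1, e2', e3]
        simp only [coeff_val, val_mk]
        split_ifs <;> (try simp only [or_true, true_or, true_and, and_true, not_true, false_or, or_false] at *) <;> omega
  · -- i.val = n + 3
    have hv : i = ⟨n + 3, p3⟩ := Fin.ext (show (i:ℕ) = n + 3 by omega)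
    subst hv
    have hG : ∀ k < n + 4, dd n (alpha n ⟨n + 3, p3⟩) k = e2 (n + 2) (n + 3) 1 1 k := by
      rw [alpha_eq_u]; exact G3 n
    have hRHS : ∑ k ∈ Finset.range (n + 4), dd n x k * dd n (alpha n ⟨n + 3, p3⟩) k
        = dd n x (n + 2) * 1 + dd n x (n + 3) * 1 := by
      rw [Finset.sum_congr rfl (fun k hk => by rw [hG k (Finset.mem_range.mp hk)])]
      exact sum_mul_e2 (n + 4) _ _ _ _ _ (by omega) (by omega)
    rw [hRHS]
    rw [sum_supp2 n _ ⟨n + 1, p1⟩ ⟨n + 3, p3⟩ (mk_ne n _ _ _ _ (by omega)) ?h0]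
    case h0 =>
      intro k h1 h2
      have v1 : (k : ℕ) ≠ n + 1 := fun hv => h1 (Fin.ext hv)
      have v2 : (k : ℕ) ≠ n + 3 := fun hv => h2 (Fin.ext hv)
      rw [coeff_val, if_neg (by rw [val_mk]; omega), if_neg (by rw [val_mk]; omega)]
      ring
    rw [dd_val2 n x, dd_val3 n x, e1, e2', e3]
    simp only [coeff_val, val_mk]
    split_ifs <;> (try simp only [or_true, true_or, true_and, and_true, not_true, false_or, or_false] at *) <;> omega

lemma coeff_diag (i : Fin (n + 4)) : coeff n i i = -2 := by simp [coeff]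

lemma sum_alpha (i l : Fin (n + 4)) : ∑ j, coeff n i j * alpha n l j = coeff n i l := by
  simp only [alpha, Pi.single_apply, mul_ite, mul_one, mul_zero]
  rw [Finset.sum_ite_eq' Finset.univ l (coeff n i)]
  simp

lemma alpha_mem (i : Fin (n + 4)) : alpha n i ∈ posRoots n := by
  refine Or.inl (Or.inl ⟨i, i, le_rfl, fun hpl => ?_, alpha_eq_u n i⟩)
  have := hpl.1.symm.trans hpl.2
  rw [Fin.ext_iff, val_pre, val_last] at this
  omega

lemma qq_alpha (i : Fin (n + 4)) : qq n (alpha n i) = 2 := qq_pos n _ (alpha_mem n i)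

lemma qq_expand (x y : Fin (n + 4) → ℤ) (c : ℤ) :
    qq n (x + c • y) = qq n x + 2 * c * (∑ k ∈ Finset.range (n + 4), dd n x k * dd n y k)
      + c ^ 2 * qq n y := by
  have h : ∀ k ∈ Finset.range (n + 4), dd n (x + c • y) k ^ 2
      = dd n x k ^ 2 + 2 * c * (dd n x k * dd n y k) + c ^ 2 * dd n y k ^ 2 := by
    intro k _
    rw [dd_add, dd_smul]
    ring
  rw [qq, Finset.sum_congr rfl h, Finset.sum_add_distrib, Finset.sum_add_distrib,
    ← Finset.mul_sum, ← Finset.mul_sum]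
  rfl

lemma refl_qq (i : Fin (n + 4)) (x : Fin (n + 4) → ℤ) : qq n (refl n i x) = qq n x := by
  have h := qq_expand n x (alpha n i) (∑ j, coeff n i j * x j)
  have hL := L1 n i x
  rw [refl, h, qq_alpha]
  set t := ∑ j, coeff n i j * x j
  have hc : ∑ k ∈ Finset.range (n + 4), dd n x k * dd n (alpha n i) k = -t := by
    rw [← neg_neg (∑ k ∈ Finset.range (n + 4), dd n x k * dd n (alpha n i) k), ← hL]
  rw [hc]
  ring

lemma refl_refl (i : Fin (n + 4)) (x : Fin (n + 4) → ℤ) : refl n i (refl n i x) = x := by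
  have h1 : ∀ j, coeff n i j * (refl n i x) j
      = coeff n i j * x j + (∑ j', coeff n i j' * x j') * (coeff n i j * alpha n i j) := by
    intro j
    simp only [refl, Pi.add_apply, Pi.smul_apply, smul_eq_mul]
    ring
  have ht' : (∑ j, coeff n i j * (refl n i x) j) = -(∑ j, coeff n i j * x j) := by
    rw [Finset.sum_congr rfl (fun j _ => h1 j), Finset.sum_add_distrib]
    have : ∑ j, (∑ j', coeff n i j' * x j') * (coeff n i j * alpha n i j)
        = (∑ j', coeff n i j' * x j') * ∑ j, coeff n i j * alpha n i j := by
      rw [Finset.mul_sum]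
    rw [this, sum_alpha, coeff_diag]
    ring
  funext l
  simp only [refl, Pi.add_apply, Pi.smul_apply, smul_eq_mul] at ht' ⊢
  rw [ht']
  ring

lemma refl_mem (i : Fin (n + 4)) (x : Fin (n + 4) → ℤ) (hx : x ∈ roots n) :
    refl n i x ∈ roots n :=
  (roots_iff n _).mpr (by rw [refl_qq]; exact (roots_iff n x).mp hx)

lemma string_iff (i j : Fin (n + 4)) (m : ℕ) :
    (alpha n j + (m : ℤ) • alpha n i ∈ roots n) ↔ (m : ℤ) * ((m : ℤ) - coeff n i j) = 0 := by
  rw [roots_iff, qq_expand, qq_alpha, qq_alpha]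
  have hc : ∑ k ∈ Finset.range (n + 4), dd n (alpha n j) k * dd n (alpha n i) k
      = -coeff n i j := by
    have hL := L1 n i (alpha n j)
    rw [sum_alpha] at hL
    rw [← neg_neg (∑ k ∈ Finset.range (n + 4), dd n (alpha n j) k * dd n (alpha n i) k), ← hL]
  rw [hc]
  constructor <;> intro h <;> nlinarith [h]

/-- in the super root system of type `D_θ` (`θ = n+4 ≥ 4`) with
the trivial parity function:
(a) every reflection `s_i` preserves the set of roots;
(b) the string lengths `max{ k : α j + k α i ∈ Δ }` are `1` for adjacent pairs
and `0` otherwise, so the recovered generalized Cartan matrix is of type `D_θ`. -/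
theorem super_type_D_root_system :
    (∀ i : Fin (n + 4), refl n i '' roots n = roots n)
    ∧ (∀ i j : Fin (n + 4), i ≠ j →
        IsGreatest {m : ℕ | alpha n j + (m : ℤ) • alpha n i ∈ roots n}
          (if adjacent n i j then 1 else 0)) := by
  constructor
  · intro i
    apply Set.Subset.antisymm
    · rintro _ ⟨y, hy, rfl⟩
      exact refl_mem n i y hy
    · intro y hy
      exact ⟨refl n i y, refl_mem n i y hy, refl_refl n i y⟩
  · intro i j hij
    have hji : ¬ j = i := fun h => hij h.symm
    split_ifs with hadj
    · have hco : coeff n i j = 1 := by rw [coeff, if_neg hji, if_pos hadj]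
      constructor
      · simp only [Set.mem_setOf_eq, string_iff, hco]
        norm_num
      · intro m hm
        simp only [Set.mem_setOf_eq, string_iff, hco] at hm
        rcases mul_eq_zero.mp hm with h | h <;> omega
    · have hco : coeff n i j = 0 := by rw [coeff, if_neg hji, if_neg hadj]
      constructor
      · simp only [Set.mem_setOf_eq, string_iff, hco]
        norm_num
      · intro m hm
        simp only [Set.mem_setOf_eq, string_iff, hco] at hm
        have hz : (m : ℤ) = 0 := by nlinarith [hm]
        omega


end SuperRootSystemD
end

section
/- Let k be a field of characteristic ≠ 2, (C, Δ, ε) a coassociative counital k-coalgebra, and σ : C → C a coalgebra automorphism with σ ∘ σ = id; set p± := (1/2)(id ± σ). Then the k-module C × C equipped with the comultiplication Δ^σ determined by Δ^σ(c, 0) = Σ (c^{(1)}, 0) ⊗ (p₊(c^{(2)}), 0) + (0, c^{(1)}) ⊗ (p₋(c^{(2)}), 0) and Δ^σ(0, c) = Σ (0, c^{(1)}) ⊗ (0, p₊(c^{(2)})) + (c^{(1)}, 0) ⊗ (0, p₋(c^{(2)})), and the counit ε^σ(a, b) := ε(a) + ε(b), is a coassociative counital k-coalgebra. (This is the smash coproduct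 C^σ = C # k[ℤ/2]: identifying (a,b) with a#1 + b#σ, on σ-homogeneous components the comultiplication reads Δ(c # σ^k) = c^{(1)} # σ^{|c^{(2)}|+k} ⊗ c^{(2)} # σ^k.) -/
set_option linter.unusedSectionVars false
set_option linter.unusedVariables false
set_option maxHeartbeats 1000000


open TensorProduct

noncomputable section

namespace SmashCoproduct

variable {k C : Type*} [Field k] [AddCommGroup C] [Module k C] [Coalgebra k C]

/-- The projection `p₊ = (1/2)(id + σ)` onto the even part. -/
def pPlus (σ : C →ₗ[k] C) : C →ₗ[k] C := (2 : k)⁻¹ • (LinearMap.id + σ)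

/-- The projection `p₋ = (1/2)(id − σ)` onto the odd part. -/
def pMinus (σ : C →ₗ[k] C) : C →ₗ[k] C := (2 : k)⁻¹ • (LinearMap.id - σ)

section Aux

variable (σ : C →ₗ[k] C)

/-- `N₊ = (id ⊗ p₊) ∘ Δ`. -/
def Np : C →ₗ[k] C ⊗[k] C := LinearMap.lTensor C (pPlus σ) ∘ₗ Coalgebra.comul

/-- `N₋ = (id ⊗ p₋) ∘ Δ`. -/
def Nm : C →ₗ[k] C ⊗[k] C := LinearMap.lTensor C (pMinus σ) ∘ₗ Coalgebra.comul

variable {σ}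

lemma half_smul_add_self (hchar : (2 : k) ≠ 0) {M : Type*} [AddCommGroup M] [Module k M]
    (x : M) : (2 : k)⁻¹ • (x + x) = x := by
  rw [← two_smul k x, smul_smul, inv_mul_cancel₀ hchar, one_smul]

lemma pPlus_apply (c : C) : pPlus σ c = (2 : k)⁻¹ • (c + σ c) := by
  simp [pPlus]

lemma pMinus_apply (c : C) : pMinus σ c = (2 : k)⁻¹ • (c - σ c) := by
  simp [pMinus]

lemma sigma_pPlus (hσσ : ∀ c, σ (σ c) = c) (c : C) : σ (pPlus σ c) = pPlus σ c := by
  have h : σ (pPlus σ c) = (2 : k)⁻¹ • (σ c + c) := by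
    rw [pPlus_apply, map_smul, map_add, hσσ]
  rw [h, pPlus_apply, add_comm]

lemma sigma_pMinus (hσσ : ∀ c, σ (σ c) = c) (c : C) : σ (pMinus σ c) = - pMinus σ c := by
  have h : σ (pMinus σ c) = (2 : k)⁻¹ • (σ c - c) := by
    rw [pMinus_apply, map_smul, map_sub, hσσ]
  rw [h, pMinus_apply, ← smul_neg, neg_sub]

lemma pPlus_comp_pPlus (hchar : (2 : k) ≠ 0) (hσσ : ∀ c, σ (σ c) = c) :
    pPlus σ ∘ₗ pPlus σ = pPlus σ := by
  ext c
  simp only [LinearMap.comp_apply]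
  rw [pPlus_apply (c := pPlus σ c), sigma_pPlus hσσ, half_smul_add_self hchar]

lemma pMinus_comp_pMinus (hchar : (2 : k) ≠ 0) (hσσ : ∀ c, σ (σ c) = c) :
    pMinus σ ∘ₗ pMinus σ = pMinus σ := by
  ext c
  simp only [LinearMap.comp_apply]
  rw [pMinus_apply (c := pMinus σ c), sigma_pMinus hσσ, sub_neg_eq_add,
    half_smul_add_self hchar]

lemma pPlus_comp_pMinus (hσσ : ∀ c, σ (σ c) = c) :
    pPlus σ ∘ₗ pMinus σ = 0 := by
  ext c
  simp only [LinearMap.comp_apply, LinearMap.zero_apply]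
  rw [pPlus_apply (c := pMinus σ c), sigma_pMinus hσσ, add_neg_cancel, smul_zero]

lemma pMinus_comp_pPlus (hσσ : ∀ c, σ (σ c) = c) :
    pMinus σ ∘ₗ pPlus σ = 0 := by
  ext c
  simp only [LinearMap.comp_apply, LinearMap.zero_apply]
  rw [pMinus_apply (c := pPlus σ c), sigma_pPlus hσσ, sub_self, smul_zero]

lemma pPlus_add_pMinus (hchar : (2 : k) ≠ 0) :
    pPlus σ + pMinus σ = LinearMap.id := by
  ext c
  simp only [LinearMap.add_apply, LinearMap.id_apply, pPlus_apply, pMinus_apply]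
  rw [← smul_add, add_add_sub_cancel, half_smul_add_self hchar]

lemma counit_comp_pPlus (hchar : (2 : k) ≠ 0)
    (hσcounit : ∀ c : C, (Coalgebra.counit (σ c) : k) = Coalgebra.counit c) :
    (Coalgebra.counit : C →ₗ[k] k) ∘ₗ pPlus σ = Coalgebra.counit := by
  ext c
  simp only [LinearMap.comp_apply, pPlus_apply, map_smul, map_add, hσcounit]
  exact half_smul_add_self hchar _

lemma counit_comp_pMinus
    (hσcounit : ∀ c : C, (Coalgebra.counit (σ c) : k) = Coalgebra.counit c) :
    (Coalgebra.counit : C →ₗ[k] k) ∘ₗ pMinus σ = 0 := by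
  ext c
  simp only [LinearMap.comp_apply, pMinus_apply, map_smul, map_sub, hσcounit,
    sub_self, smul_zero, LinearMap.zero_apply]

lemma maps_pp (hchar : (2 : k) ≠ 0) :
    map (pPlus σ) (pPlus σ) + map (pMinus σ) (pMinus σ)
      = (2 : k)⁻¹ • (LinearMap.id + map σ σ) := by
  apply TensorProduct.ext'
  intro x y
  simp only [LinearMap.add_apply, map_tmul, LinearMap.smul_apply, LinearMap.id_apply,
    pPlus_apply, pMinus_apply]
  simp only [smul_tmul', tmul_smul, smul_smul, add_tmul, sub_tmul, tmul_add, tmul_sub,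
    tmul_add, smul_add, smul_sub]
  simp only [← smul_tmul']
  match_scalars <;> field_simp <;> norm_num

lemma maps_pm (hchar : (2 : k) ≠ 0) :
    map (pPlus σ) (pMinus σ) + map (pMinus σ) (pPlus σ)
      = (2 : k)⁻¹ • (LinearMap.id - map σ σ) := by
  apply TensorProduct.ext'
  intro x y
  simp only [LinearMap.add_apply, map_tmul, LinearMap.smul_apply, LinearMap.id_apply,
    LinearMap.sub_apply, pPlus_apply, pMinus_apply]
  simp only [smul_tmul', tmul_smul, smul_smul, add_tmul, sub_tmul, tmul_add, tmul_sub,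
    smul_add, smul_sub]
  simp only [← smul_tmul']
  match_scalars <;> field_simp <;> norm_num

lemma comul_comp_sigma
    (hσcomul : ∀ c : C, Coalgebra.comul (σ c) = TensorProduct.map σ σ (Coalgebra.comul c)) :
    (Coalgebra.comul : C →ₗ[k] C ⊗[k] C) ∘ₗ σ = map σ σ ∘ₗ Coalgebra.comul :=
  LinearMap.ext hσcomul

lemma comul_comp_pPlus (hchar : (2 : k) ≠ 0)
    (hσcomul : ∀ c : C, Coalgebra.comul (σ c) = TensorProduct.map σ σ (Coalgebra.comul c)) :
    (Coalgebra.comul : C →ₗ[k] C ⊗[k] C) ∘ₗ pPlus σ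
      = (map (pPlus σ) (pPlus σ) + map (pMinus σ) (pMinus σ)) ∘ₗ Coalgebra.comul := by
  rw [maps_pp hchar]
  ext c
  simp only [LinearMap.comp_apply, pPlus_apply, map_smul, map_add, hσcomul,
    LinearMap.smul_apply, LinearMap.add_apply, LinearMap.id_apply]

lemma comul_comp_pMinus (hchar : (2 : k) ≠ 0)
    (hσcomul : ∀ c : C, Coalgebra.comul (σ c) = TensorProduct.map σ σ (Coalgebra.comul c)) :
    (Coalgebra.comul : C →ₗ[k] C ⊗[k] C) ∘ₗ pMinus σ
      = (map (pPlus σ) (pMinus σ) + map (pMinus σ) (pPlus σ)) ∘ₗ Coalgebra.comul := by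
  rw [maps_pm hchar]
  ext c
  simp only [LinearMap.comp_apply, pMinus_apply, map_smul, map_sub, hσcomul,
    LinearMap.smul_apply, LinearMap.sub_apply, LinearMap.id_apply]

variable (σ)

lemma Np_comp_pPlus (hchar : (2 : k) ≠ 0) (hσσ : ∀ c, σ (σ c) = c)
    (hσcomul : ∀ c : C, Coalgebra.comul (σ c) = TensorProduct.map σ σ (Coalgebra.comul c)) :
    Np σ ∘ₗ pPlus σ = map (pPlus σ) (pPlus σ) ∘ₗ Coalgebra.comul := by
  rw [Np, LinearMap.comp_assoc, comul_comp_pPlus hchar hσcomul, ← LinearMap.comp_assoc,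
    LinearMap.comp_add, LinearMap.lTensor_comp_map, LinearMap.lTensor_comp_map,
    pPlus_comp_pPlus hchar hσσ, pPlus_comp_pMinus hσσ, map_zero_right]
  simp

lemma Np_comp_pMinus (hchar : (2 : k) ≠ 0) (hσσ : ∀ c, σ (σ c) = c)
    (hσcomul : ∀ c : C, Coalgebra.comul (σ c) = TensorProduct.map σ σ (Coalgebra.comul c)) :
    Np σ ∘ₗ pMinus σ = map (pMinus σ) (pPlus σ) ∘ₗ Coalgebra.comul := by
  rw [Np, LinearMap.comp_assoc, comul_comp_pMinus hchar hσcomul, ← LinearMap.comp_assoc,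
    LinearMap.comp_add, LinearMap.lTensor_comp_map, LinearMap.lTensor_comp_map,
    pPlus_comp_pPlus hchar hσσ, pPlus_comp_pMinus hσσ, map_zero_right]
  simp

lemma Nm_comp_pPlus (hchar : (2 : k) ≠ 0) (hσσ : ∀ c, σ (σ c) = c)
    (hσcomul : ∀ c : C, Coalgebra.comul (σ c) = TensorProduct.map σ σ (Coalgebra.comul c)) :
    Nm σ ∘ₗ pPlus σ = map (pMinus σ) (pMinus σ) ∘ₗ Coalgebra.comul := by
  rw [Nm, LinearMap.comp_assoc, comul_comp_pPlus hchar hσcomul, ← LinearMap.comp_assoc,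
    LinearMap.comp_add, LinearMap.lTensor_comp_map, LinearMap.lTensor_comp_map,
    pMinus_comp_pPlus hσσ, pMinus_comp_pMinus hchar hσσ, map_zero_right]
  simp

lemma Nm_comp_pMinus (hchar : (2 : k) ≠ 0) (hσσ : ∀ c, σ (σ c) = c)
    (hσcomul : ∀ c : C, Coalgebra.comul (σ c) = TensorProduct.map σ σ (Coalgebra.comul c)) :
    Nm σ ∘ₗ pMinus σ = map (pPlus σ) (pMinus σ) ∘ₗ Coalgebra.comul := by
  rw [Nm, LinearMap.comp_assoc, comul_comp_pMinus hchar hσcomul, ← LinearMap.comp_assoc,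
    LinearMap.comp_add, LinearMap.lTensor_comp_map, LinearMap.lTensor_comp_map,
    pMinus_comp_pPlus hσσ, pMinus_comp_pMinus hchar hσσ, map_zero_right]
  simp

lemma Np_add_Nm (hchar : (2 : k) ≠ 0) :
    Np σ + Nm σ = (Coalgebra.comul : C →ₗ[k] C ⊗[k] C) := by
  rw [Np, Nm, ← LinearMap.add_comp, ← LinearMap.lTensor_add, pPlus_add_pMinus hchar,
    LinearMap.lTensor_id, LinearMap.id_comp]

variable {σ}

/-- The master identity: `assoc ∘ (Nₛ ⊗ id) ∘ Nₜ = (id ⊗ Nₜ) ∘ N_{st}`. -/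
lemma master (P Q R : C →ₗ[k] C)
    (hN : (LinearMap.lTensor C Q ∘ₗ (Coalgebra.comul : C →ₗ[k] C ⊗[k] C)) ∘ₗ R
        = map P Q ∘ₗ Coalgebra.comul) :
    (TensorProduct.assoc k C C C).toLinearMap ∘ₗ
        (LinearMap.lTensor C P ∘ₗ (Coalgebra.comul : C →ₗ[k] C ⊗[k] C)).rTensor C ∘ₗ
        (LinearMap.lTensor C Q ∘ₗ Coalgebra.comul)
      = LinearMap.lTensor C (LinearMap.lTensor C Q ∘ₗ Coalgebra.comul) ∘ₗ
        (LinearMap.lTensor C R ∘ₗ Coalgebra.comul) := by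
  have hR : LinearMap.lTensor C (LinearMap.lTensor C Q ∘ₗ (Coalgebra.comul : C →ₗ[k] C ⊗[k] C)) ∘ₗ
      (LinearMap.lTensor C R ∘ₗ Coalgebra.comul)
      = LinearMap.lTensor C (map P Q) ∘ₗ
        (LinearMap.lTensor C (Coalgebra.comul : C →ₗ[k] C ⊗[k] C) ∘ₗ Coalgebra.comul) := by
    rw [← LinearMap.comp_assoc, ← LinearMap.lTensor_comp, hN, LinearMap.lTensor_comp,
      LinearMap.comp_assoc]
  rw [hR, ← Coalgebra.coassoc]
  -- now both sides end with `rTensor comul ∘ comul`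
  rw [LinearMap.rTensor_comp]
  -- LHS : assoc ∘ rT (lT P) ∘ rT Δ ∘ lT Q ∘ Δ
  have hswap : (LinearMap.rTensor C (Coalgebra.comul : C →ₗ[k] C ⊗[k] C)) ∘ₗ
      LinearMap.lTensor C Q
      = LinearMap.lTensor (C ⊗[k] C) Q ∘ₗ LinearMap.rTensor C Coalgebra.comul := by
    rw [LinearMap.rTensor_comp_lTensor, LinearMap.lTensor_comp_rTensor]
  have hnat : (TensorProduct.assoc k C C C).toLinearMap ∘ₗ
      (LinearMap.rTensor C (LinearMap.lTensor C P) ∘ₗ LinearMap.lTensor (C ⊗[k] C) Q)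
      = LinearMap.lTensor C (map P Q) ∘ₗ (TensorProduct.assoc k C C C).toLinearMap := by
    have := TensorProduct.map_map_comp_assoc_eq (R := k) (LinearMap.id : C →ₗ[k] C) P Q
    rw [LinearMap.rTensor_comp_lTensor]
    exact this.symm
  calc (TensorProduct.assoc k C C C).toLinearMap ∘ₗ
        (LinearMap.rTensor C (LinearMap.lTensor C P) ∘ₗ
          LinearMap.rTensor C (Coalgebra.comul : C →ₗ[k] C ⊗[k] C)) ∘ₗ
        (LinearMap.lTensor C Q ∘ₗ Coalgebra.comul)
      = (TensorProduct.assoc k C C C).toLinearMap ∘ₗ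
          (LinearMap.rTensor C (LinearMap.lTensor C P) ∘ₗ LinearMap.lTensor (C ⊗[k] C) Q) ∘ₗ
          (LinearMap.rTensor C (Coalgebra.comul : C →ₗ[k] C ⊗[k] C) ∘ₗ Coalgebra.comul) := by
        have hswap2 : LinearMap.rTensor C (Coalgebra.comul : C →ₗ[k] C ⊗[k] C) ∘ₗ
            (LinearMap.lTensor C Q ∘ₗ Coalgebra.comul)
            = LinearMap.lTensor (C ⊗[k] C) Q ∘ₗ
              (LinearMap.rTensor C (Coalgebra.comul : C →ₗ[k] C ⊗[k] C) ∘ₗ Coalgebra.comul) := by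
          rw [← LinearMap.comp_assoc, hswap, LinearMap.comp_assoc]
        simp only [LinearMap.comp_assoc]
        rw [hswap2]
    _ = LinearMap.lTensor C (map P Q) ∘ₗ ((TensorProduct.assoc k C C C).toLinearMap ∘ₗ
          LinearMap.rTensor C (Coalgebra.comul : C →ₗ[k] C ⊗[k] C) ∘ₗ Coalgebra.comul) := by
        rw [← LinearMap.comp_assoc, hnat]
        simp only [LinearMap.comp_assoc]

variable (σ)

lemma master_pp (hchar : (2 : k) ≠ 0) (hσσ : ∀ c, σ (σ c) = c)
    (hσcomul : ∀ c : C, Coalgebra.comul (σ c) = TensorProduct.map σ σ (Coalgebra.comul c)) :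
    (TensorProduct.assoc k C C C).toLinearMap ∘ₗ (Np σ).rTensor C ∘ₗ Np σ
      = LinearMap.lTensor C (Np σ) ∘ₗ Np σ :=
  master (pPlus σ) (pPlus σ) (pPlus σ) (Np_comp_pPlus σ hchar hσσ hσcomul)

lemma master_mp (hchar : (2 : k) ≠ 0) (hσσ : ∀ c, σ (σ c) = c)
    (hσcomul : ∀ c : C, Coalgebra.comul (σ c) = TensorProduct.map σ σ (Coalgebra.comul c)) :
    (TensorProduct.assoc k C C C).toLinearMap ∘ₗ (Nm σ).rTensor C ∘ₗ Np σ
      = LinearMap.lTensor C (Np σ) ∘ₗ Nm σ :=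
  master (pMinus σ) (pPlus σ) (pMinus σ) (Np_comp_pMinus σ hchar hσσ hσcomul)

lemma master_pm (hchar : (2 : k) ≠ 0) (hσσ : ∀ c, σ (σ c) = c)
    (hσcomul : ∀ c : C, Coalgebra.comul (σ c) = TensorProduct.map σ σ (Coalgebra.comul c)) :
    (TensorProduct.assoc k C C C).toLinearMap ∘ₗ (Np σ).rTensor C ∘ₗ Nm σ
      = LinearMap.lTensor C (Nm σ) ∘ₗ Nm σ :=
  master (pPlus σ) (pMinus σ) (pMinus σ) (Nm_comp_pMinus σ hchar hσσ hσcomul)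

lemma master_mm (hchar : (2 : k) ≠ 0) (hσσ : ∀ c, σ (σ c) = c)
    (hσcomul : ∀ c : C, Coalgebra.comul (σ c) = TensorProduct.map σ σ (Coalgebra.comul c)) :
    (TensorProduct.assoc k C C C).toLinearMap ∘ₗ (Nm σ).rTensor C ∘ₗ Nm σ
      = LinearMap.lTensor C (Nm σ) ∘ₗ Np σ :=
  master (pMinus σ) (pMinus σ) (pPlus σ) (Nm_comp_pPlus σ hchar hσσ hσcomul)

end Aux

/-- The smash coproduct `Δ^σ` on `C × C` (identifying `(a,b)` with `a#1 + b#σ`):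
`Δ^σ(c,0) = Σ (c¹,0) ⊗ (p₊ c²,0) + (0,c¹) ⊗ (p₋ c²,0)` and
`Δ^σ(0,c) = Σ (0,c¹) ⊗ (0,p₊ c²) + (c¹,0) ⊗ (0,p₋ c²)`. -/
def smashComul (σ : C →ₗ[k] C) : (C × C) →ₗ[k] (C × C) ⊗[k] (C × C) :=
  ((TensorProduct.map (LinearMap.inl k C C) (LinearMap.inl k C C)
        ∘ₗ LinearMap.lTensor C (pPlus σ) ∘ₗ Coalgebra.comul
      + TensorProduct.map (LinearMap.inr k C C) (LinearMap.inl k C C)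
        ∘ₗ LinearMap.lTensor C (pMinus σ) ∘ₗ Coalgebra.comul)
    ∘ₗ LinearMap.fst k C C)
  + ((TensorProduct.map (LinearMap.inr k C C) (LinearMap.inr k C C)
        ∘ₗ LinearMap.lTensor C (pPlus σ) ∘ₗ Coalgebra.comul
      + TensorProduct.map (LinearMap.inl k C C) (LinearMap.inr k C C)
        ∘ₗ LinearMap.lTensor C (pMinus σ) ∘ₗ Coalgebra.comul)
    ∘ₗ LinearMap.snd k C C)

/-- The counit `ε^σ(a,b) = ε(a) + ε(b)` of the smash coproduct. -/
def smashCounit : (C × C) →ₗ[k] k :=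
  Coalgebra.counit ∘ₗ LinearMap.fst k C C + Coalgebra.counit ∘ₗ LinearMap.snd k C C

section Assembly

variable (σ : C →ₗ[k] C)

lemma smashComul_comp_inl :
    smashComul σ ∘ₗ LinearMap.inl k C C
      = map (LinearMap.inl k C C) (LinearMap.inl k C C) ∘ₗ Np σ
        + map (LinearMap.inr k C C) (LinearMap.inl k C C) ∘ₗ Nm σ := by
  ext c
  simp [smashComul, Np, Nm]

lemma smashComul_comp_inr :
    smashComul σ ∘ₗ LinearMap.inr k C C
      = map (LinearMap.inr k C C) (LinearMap.inr k C C) ∘ₗ Np σ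
        + map (LinearMap.inl k C C) (LinearMap.inr k C C) ∘ₗ Nm σ := by
  ext c
  simp [smashComul, Np, Nm]

lemma smashCounit_comp_inl :
    (smashCounit : (C × C) →ₗ[k] k) ∘ₗ LinearMap.inl k C C = Coalgebra.counit := by
  ext c
  simp [smashCounit]

lemma smashCounit_comp_inr :
    (smashCounit : (C × C) →ₗ[k] k) ∘ₗ LinearMap.inr k C C = Coalgebra.counit := by
  ext c
  simp [smashCounit]

variable {σ}

/-- Generic component computation for coassociativity. -/
lemma coassoc_comp (hchar : (2 : k) ≠ 0) (hσσ : ∀ c, σ (σ c) = c)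
    (hσcomul : ∀ c : C, Coalgebra.comul (σ c) = TensorProduct.map σ σ (Coalgebra.comul c))
    (j j' : C →ₗ[k] C × C)
    (hj : smashComul σ ∘ₗ j = map j j ∘ₗ Np σ + map j' j ∘ₗ Nm σ)
    (hj' : smashComul σ ∘ₗ j' = map j' j' ∘ₗ Np σ + map j j' ∘ₗ Nm σ) (c : C) :
    (TensorProduct.assoc k (C × C) (C × C) (C × C))
        (((smashComul σ).rTensor (C × C)) (smashComul σ (j c)))
      = ((smashComul σ).lTensor (C × C)) (smashComul σ (j c)) := by
  have hr : ∀ (f g : C →ₗ[k] C × C) (t : C ⊗[k] C),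
      (smashComul σ).rTensor (C × C) (map f g t) = map (smashComul σ ∘ₗ f) g t :=
    fun f g t => LinearMap.congr_fun (LinearMap.rTensor_comp_map _ (smashComul σ) f g) t
  have hl : ∀ (f g : C →ₗ[k] C × C) (t : C ⊗[k] C),
      (smashComul σ).lTensor (C × C) (map f g t) = map f (smashComul σ ∘ₗ g) t :=
    fun f g t => LinearMap.congr_fun (LinearMap.lTensor_comp_map _ (smashComul σ) f g) t
  have hmr : ∀ (X : C ⊗[k] C →ₗ[k] (C × C) ⊗[k] (C × C)) (g : C →ₗ[k] C × C)
      (N : C →ₗ[k] C ⊗[k] C) (t : C ⊗[k] C),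
      map (X ∘ₗ N) g t = map X g (N.rTensor C t) :=
    fun X g N t => (LinearMap.congr_fun (LinearMap.map_comp_rTensor _ X g N) t).symm
  have hml : ∀ (g : C →ₗ[k] C × C) (X : C ⊗[k] C →ₗ[k] (C × C) ⊗[k] (C × C))
      (N : C →ₗ[k] C ⊗[k] C) (t : C ⊗[k] C),
      map g (X ∘ₗ N) t = map g X (N.lTensor C t) :=
    fun g X N t => (LinearMap.congr_fun (LinearMap.map_comp_lTensor _ g X N) t).symm
  have e1 : smashComul σ (j c) = map j j (Np σ c) + map j' j (Nm σ c) := by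
    simpa using LinearMap.congr_fun hj c
  have mpp := fun c => LinearMap.congr_fun (master_pp σ hchar hσσ hσcomul) c
  have mmp := fun c => LinearMap.congr_fun (master_mp σ hchar hσσ hσcomul) c
  have mpm := fun c => LinearMap.congr_fun (master_pm σ hchar hσσ hσcomul) c
  have mmm := fun c => LinearMap.congr_fun (master_mm σ hchar hσσ hσcomul) c
  simp only [LinearMap.comp_apply, LinearEquiv.coe_coe] at mpp mmp mpm mmm
  rw [e1]
  simp only [map_add]
  rw [hr, hr, hl, hl, hj, hj']
  simp only [map_add_left, map_add_right, LinearMap.add_apply, map_add]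
  rw [hmr, hmr, hmr, hmr, hml, hml, hml, hml]
  simp only [← TensorProduct.map_map_assoc]
  rw [mpp, mmp, mpm, mmm]
  abel

lemma lid_map_nat (f : C →ₗ[k] k) (g : C →ₗ[k] C × C) (t : C ⊗[k] C) :
    TensorProduct.lid k (C × C) (map f g t) = g (TensorProduct.lid k C (f.rTensor C t)) := by
  induction t using TensorProduct.induction_on with
  | zero => simp
  | tmul x y => simp [map_smul]
  | add u v hu hv => simp [map_add, hu, hv]

lemma rid_map_nat (f : C →ₗ[k] k) (g : C →ₗ[k] C × C) (t : C ⊗[k] C) :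
    TensorProduct.rid k (C × C) (map g f t) = g (TensorProduct.rid k C (f.lTensor C t)) := by
  induction t using TensorProduct.induction_on with
  | zero => simp
  | tmul x y => simp [map_smul]
  | add u v hu hv => simp [map_add, hu, hv]

/-- Generic component computation for the left counit law. -/
lemma counit_left_comp (hchar : (2 : k) ≠ 0) (j j' : C →ₗ[k] C × C)
    (hj : smashComul σ ∘ₗ j = map j j ∘ₗ Np σ + map j' j ∘ₗ Nm σ)
    (hcj : (smashCounit : (C × C) →ₗ[k] k) ∘ₗ j = Coalgebra.counit)
    (hcj' : (smashCounit : (C × C) →ₗ[k] k) ∘ₗ j' = Coalgebra.counit) (c : C) :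
    TensorProduct.lid k (C × C)
        (((smashCounit (k := k) (C := C)).rTensor (C × C)) (smashComul σ (j c))) = j c := by
  have hr : ∀ (f : C →ₗ[k] C × C) (g : C →ₗ[k] C × C) (t : C ⊗[k] C),
      (smashCounit (k := k) (C := C)).rTensor (C × C) (map f g t)
        = map ((smashCounit : (C × C) →ₗ[k] k) ∘ₗ f) g t :=
    fun f g t => LinearMap.congr_fun (LinearMap.rTensor_comp_map _ smashCounit f g) t
  have e1 : smashComul σ (j c) = map j j (Np σ c) + map j' j (Nm σ c) := by
    simpa using LinearMap.congr_fun hj c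
  have e2 : Np σ c + Nm σ c = Coalgebra.comul c := by
    simpa using LinearMap.congr_fun (Np_add_Nm σ hchar) c
  rw [e1, map_add, hr, hr, hcj, hcj']
  rw [← map_add, e2, lid_map_nat, Coalgebra.rTensor_counit_comul]
  simp

/-- Generic component computation for the right counit law. -/
lemma counit_right_comp (hchar : (2 : k) ≠ 0)
    (hσcounit : ∀ c : C, (Coalgebra.counit (σ c) : k) = Coalgebra.counit c)
    (j j' : C →ₗ[k] C × C)
    (hj : smashComul σ ∘ₗ j = map j j ∘ₗ Np σ + map j' j ∘ₗ Nm σ)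
    (hcj : (smashCounit : (C × C) →ₗ[k] k) ∘ₗ j = Coalgebra.counit)
    (hcj' : (smashCounit : (C × C) →ₗ[k] k) ∘ₗ j' = Coalgebra.counit) (c : C) :
    TensorProduct.rid k (C × C)
        (((smashCounit (k := k) (C := C)).lTensor (C × C)) (smashComul σ (j c))) = j c := by
  have hl : ∀ (f : C →ₗ[k] C × C) (g : C →ₗ[k] C × C) (t : C ⊗[k] C),
      (smashCounit (k := k) (C := C)).lTensor (C × C) (map f g t)
        = map f ((smashCounit : (C × C) →ₗ[k] k) ∘ₗ g) t :=
    fun f g t => LinearMap.congr_fun (LinearMap.lTensor_comp_map _ smashCounit f g) t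
  have e1 : smashComul σ (j c) = map j j (Np σ c) + map j' j (Nm σ c) := by
    simpa using LinearMap.congr_fun hj c
  have hml : ∀ (g : C →ₗ[k] C × C) (X : C →ₗ[k] k)
      (N : C →ₗ[k] C) (t : C ⊗[k] C),
      map g (X ∘ₗ N) t = map g X (N.lTensor C t) :=
    fun g X N t => (LinearMap.congr_fun (LinearMap.map_comp_lTensor _ g X N) t).symm
  have eNp : ∀ t : C ⊗[k] C, map j (Coalgebra.counit : C →ₗ[k] k) (LinearMap.lTensor C (pPlus σ) t)
      = map j (Coalgebra.counit : C →ₗ[k] k) t := by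
    intro t
    rw [← hml, counit_comp_pPlus hchar hσcounit]
  have eNm : ∀ t : C ⊗[k] C, map j' (Coalgebra.counit : C →ₗ[k] k) (LinearMap.lTensor C (pMinus σ) t)
      = 0 := by
    intro t
    rw [← hml, counit_comp_pMinus hσcounit, map_zero_right, LinearMap.zero_apply]
  rw [e1, map_add, hl, hl, hcj]
  rw [Np, Nm, LinearMap.comp_apply, LinearMap.comp_apply, eNp, eNm, add_zero,
    rid_map_nat, Coalgebra.lTensor_counit_comul]
  simp

end Assembly

/-- if `σ` is an involutive coalgebra automorphism of `C`
(char `k ≠ 2`), then `C × C` with the smash coproduct `Δ^σ` and the counit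
`ε^σ` is a coassociative counital `k`-coalgebra
(the smash coproduct `C^σ = C # k[ℤ/2]`). -/
theorem smashCoproduct_is_coalgebra (hchar : (2 : k) ≠ 0)
    (σ : C →ₗ[k] C) (hσσ : ∀ c, σ (σ c) = c)
    (hσcomul : ∀ c : C, Coalgebra.comul (σ c) = TensorProduct.map σ σ (Coalgebra.comul c))
    (hσcounit : ∀ c : C, (Coalgebra.counit (σ c) : k) = Coalgebra.counit c) :
    (∀ x : C × C,
        (TensorProduct.assoc k (C × C) (C × C) (C × C))
          (((smashComul σ).rTensor (C × C)) (smashComul σ x))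
          = ((smashComul σ).lTensor (C × C)) (smashComul σ x))
    ∧ (∀ x : C × C,
        (TensorProduct.lid k (C × C))
          (((smashCounit (k := k) (C := C)).rTensor (C × C)) (smashComul σ x)) = x)
    ∧ (∀ x : C × C,
        (TensorProduct.rid k (C × C))
          (((smashCounit (k := k) (C := C)).lTensor (C × C)) (smashComul σ x)) = x) := by
  have hx : ∀ x : C × C, x = LinearMap.inl k C C x.1 + LinearMap.inr k C C x.2 := by
    intro x; simp
  refine ⟨fun x => ?_, fun x => ?_, fun x => ?_⟩
  · rw [hx x]
    simp only [map_add]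
    exact congrArg₂ (· + ·)
      (coassoc_comp hchar hσσ hσcomul _ _ (smashComul_comp_inl σ) (smashComul_comp_inr σ) x.1)
      (coassoc_comp hchar hσσ hσcomul _ _ (smashComul_comp_inr σ) (smashComul_comp_inl σ) x.2)
  · conv_lhs => rw [hx x]
    simp only [map_add]
    rw [counit_left_comp hchar _ _ (smashComul_comp_inl σ) smashCounit_comp_inl
        smashCounit_comp_inr x.1,
      counit_left_comp hchar _ _ (smashComul_comp_inr σ) smashCounit_comp_inr
        smashCounit_comp_inl x.2]
    exact (hx x).symm
  · conv_lhs => rw [hx x]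
    simp only [map_add]
    rw [counit_right_comp hchar hσcounit _ _ (smashComul_comp_inl σ) smashCounit_comp_inl
        smashCounit_comp_inr x.1,
      counit_right_comp hchar hσcounit _ _ (smashComul_comp_inr σ) smashCounit_comp_inr
        smashCounit_comp_inl x.2]
    exact (hx x).symm


end SmashCoproduct
end
end
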